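/- Let 0 → A → B → C → 0 be a weakly A-admissible short exact sequence of Abel complexes. Then the AE characteristics satisfy χ_A(A) − χ_A(B) + χ_A(C) = 0. -/

import Mathlib

open CategoryTheory Filter Topology

/-- The rank of an `R`-module `M`: the dimension over the fraction field `Q = Frac(R)`
of `Q ⊗_R M` (by convention `0` if that dimension is infinite). -/
noncomputable def rk (R : Type) [CommRing R] [IsDomain R]
    (M : Type) [AddCommGroup M] [Module R M] : ℕ :=
  Module.finrank (FractionRing R) (TensorProduct R (FractionRing R) M)

/-- The Abel limit: `HasAbelLim a L` means the power series `∑ aₙ xⁿ` has radius of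
convergence at least `1` (convergence for `|x| < 1`) and
`(1 - x) * ∑ aₙ xⁿ → L` as `x → 1⁻`. -/
def HasAbelLim (a : ℕ → ℝ) (L : ℝ) : Prop :=
  (∀ x : ℝ, |x| < 1 → Summable fun n => a n * x ^ n) ∧
    Tendsto (fun x : ℝ => (1 - x) * ∑' n, a n * x ^ n) (𝓝[<] 1) (𝓝 L)

open HomologicalComplex

section AuxAlg
variable {R : Type} [CommRing R] [IsDomain R]
variable {M N P : Type} [AddCommGroup M] [Module R M] [AddCommGroup N] [Module R N]
  [AddCommGroup P] [Module R P]

lemma flatQ (R : Type) [CommRing R] [IsDomain R] : Module.Flat R (FractionRing R) :=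
  IsLocalization.flat _ (nonZeroDivisors R)

lemma exact_baseChange {f : M →ₗ[R] N} {g : N →ₗ[R] P} (h : Function.Exact f g) :
    Function.Exact (f.baseChange (FractionRing R)) (g.baseChange (FractionRing R)) := by
  haveI := flatQ R
  have h2 := Module.Flat.lTensor_exact (FractionRing R) h
  show Function.Exact ⇑(f.baseChange (FractionRing R)) ⇑(g.baseChange (FractionRing R))
  rw [LinearMap.baseChange_eq_ltensor, LinearMap.baseChange_eq_ltensor]
  exact h2

lemma rk_range_eq (f : M →ₗ[R] N) :
    rk R (LinearMap.range f) =
      Module.finrank (FractionRing R) (LinearMap.range (f.baseChange (FractionRing R))) := by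
  haveI := flatQ R
  have hcomp : f = (LinearMap.range f).subtype ∘ₗ f.rangeRestrict := by ext x; rfl
  have hbc : f.baseChange (FractionRing R) =
      ((LinearMap.range f).subtype.baseChange (FractionRing R)) ∘ₗ
        (f.rangeRestrict.baseChange (FractionRing R)) := by
    conv_lhs => rw [hcomp]
    exact LinearMap.baseChange_comp _ _
  have hsurj : Function.Surjective (f.rangeRestrict.baseChange (FractionRing R)) := by
    have h := LinearMap.lTensor_surjective (FractionRing R) f.surjective_rangeRestrict
    show Function.Surjective ⇑(f.rangeRestrict.baseChange (FractionRing R))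
    rw [LinearMap.baseChange_eq_ltensor]; exact h
  have hinj : Function.Injective ((LinearMap.range f).subtype.baseChange (FractionRing R)) := by
    have h := Module.Flat.lTensor_preserves_injective_linearMap (M := FractionRing R)
      (LinearMap.range f).subtype (Submodule.injective_subtype _)
    show Function.Injective ⇑((LinearMap.range f).subtype.baseChange (FractionRing R))
    rw [LinearMap.baseChange_eq_ltensor]; exact h
  have hr : LinearMap.range (f.baseChange (FractionRing R)) =
      LinearMap.range ((LinearMap.range f).subtype.baseChange (FractionRing R)) := by
    rw [hbc, LinearMap.range_comp_of_range_eq_top _ (LinearMap.range_eq_top.2 hsurj)]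
  rw [hr]
  exact (LinearEquiv.ofInjective _ hinj).finrank_eq

end AuxAlg


variable (R : Type) [CommRing R] [IsDomain R]
  (S : ShortComplex (ChainComplex (ModuleCat R) ℕ))

/-- rank of the base-changed map induced by `g` on homology in degree `n`. -/
noncomputable def pR (n : ℕ) : ℕ :=
  Module.finrank (FractionRing R) (LinearMap.range
    (((homologyMap S.g n).hom : S.X₂.homology n →ₗ[R] S.X₃.homology n).baseChange (FractionRing R)))

variable {R S} (hS : S.ShortExact)

lemma hijDown : ∀ m : ℕ, (ComplexShape.down ℕ).Rel (m+1) m := fun m => by simp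

lemma L12
    (hfinA : ∀ n, Module.Finite (FractionRing R)
      (TensorProduct R (FractionRing R) (S.X₁.homology n)))
    (hfinB : ∀ n, Module.Finite (FractionRing R)
      (TensorProduct R (FractionRing R) (S.X₂.homology n)))
    (d : ℕ → ℕ)
    (hd : ∀ n, d n = rk R (LinearMap.range ((hS.δ (n + 1) n (by simp)).hom :
      S.X₃.homology (n + 1) →ₗ[R] S.X₁.homology n))) (n : ℕ) :
    rk R (S.X₁.homology n) + pR R S n = rk R (S.X₂.homology n) + d n := by
  haveI := flatQ R
  haveI := hfinA n; haveI := hfinB n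
  set Q := FractionRing R
  set δn : S.X₃.homology (n + 1) →ₗ[R] S.X₁.homology n := (hS.δ (n + 1) n (hijDown n)).hom with hδn
  set fn : S.X₁.homology n →ₗ[R] S.X₂.homology n := (homologyMap S.f n).hom with hfn
  set gn : S.X₂.homology n →ₗ[R] S.X₃.homology n := (homologyMap S.g n).hom with hgn
  have E1 : Function.Exact (δn.baseChange Q) (fn.baseChange Q) := by
    refine exact_baseChange (LinearMap.exact_iff.mpr ?_)
    exact ((ShortComplex.moduleCat_exact_iff_range_eq_ker _).mp
      (hS.homology_exact₁ (n+1) n (hijDown n))).symm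
  have E2 : Function.Exact (fn.baseChange Q) (gn.baseChange Q) := by
    refine exact_baseChange (LinearMap.exact_iff.mpr ?_)
    exact ((ShortComplex.moduleCat_exact_iff_range_eq_ker _).mp
      (hS.homology_exact₂ (i := n))).symm
  have RNA := LinearMap.finrank_range_add_finrank_ker (fn.baseChange Q)
  have RNB := LinearMap.finrank_range_add_finrank_ker (gn.baseChange Q)
  rw [LinearMap.exact_iff.mp E1] at RNA
  rw [LinearMap.exact_iff.mp E2] at RNB
  have hdn : d n = Module.finrank Q (LinearMap.range (δn.baseChange Q)) :=
    (hd n).trans (rk_range_eq δn)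
  have hA : rk R (S.X₁.homology n)
      = Module.finrank Q (TensorProduct R Q (S.X₁.homology n)) := rfl
  have hB : rk R (S.X₂.homology n)
      = Module.finrank Q (TensorProduct R Q (S.X₂.homology n)) := rfl
  have hp : pR R S n = Module.finrank Q (LinearMap.range (gn.baseChange Q)) := rfl
  omega

lemma L3
    (hfinC : ∀ n, Module.Finite (FractionRing R)
      (TensorProduct R (FractionRing R) (S.X₃.homology n)))
    (d : ℕ → ℕ)
    (hd : ∀ n, d n = rk R (LinearMap.range ((hS.δ (n + 1) n (by simp)).hom :
      S.X₃.homology (n + 1) →ₗ[R] S.X₁.homology n))) (n : ℕ) :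
    rk R (S.X₃.homology (n + 1)) = d n + pR R S (n + 1) := by
  haveI := flatQ R
  haveI := hfinC (n + 1)
  set Q := FractionRing R
  set δn : S.X₃.homology (n + 1) →ₗ[R] S.X₁.homology n := (hS.δ (n + 1) n (hijDown n)).hom with hδn
  set gn : S.X₂.homology (n + 1) →ₗ[R] S.X₃.homology (n + 1) := (homologyMap S.g (n + 1)).hom with hgn
  have E3 : Function.Exact (gn.baseChange Q) (δn.baseChange Q) := by
    refine exact_baseChange (LinearMap.exact_iff.mpr ?_)
    exact ((ShortComplex.moduleCat_exact_iff_range_eq_ker _).mp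
      (hS.homology_exact₃ (n+1) n (hijDown n))).symm
  have RN := LinearMap.finrank_range_add_finrank_ker (δn.baseChange Q)
  rw [LinearMap.exact_iff.mp E3] at RN
  have hdn : d n = Module.finrank Q (LinearMap.range (δn.baseChange Q)) :=
    (hd n).trans (rk_range_eq δn)
  have hC : rk R (S.X₃.homology (n + 1))
      = Module.finrank Q (TensorProduct R Q (S.X₃.homology (n + 1))) := rfl
  have hp : pR R S (n + 1) = Module.finrank Q (LinearMap.range (gn.baseChange Q)) := rfl
  omega

include hS in
lemma L4 : rk R (S.X₃.homology 0) = pR R S 0 := by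
  haveI := flatQ R
  set Q := FractionRing R
  set gn : S.X₂.homology 0 →ₗ[R] S.X₃.homology 0 := (homologyMap S.g 0).hom with hgn
  have hsurj : Function.Surjective (homologyMap S.g 0) := by
    have hno : ¬ (ComplexShape.down ℕ).Rel 0 ((ComplexShape.down ℕ).next 0) := by
      intro h; simp at h
    haveI : IsIso (S.X₂.homologyι 0) :=
      ShortComplex.isIso_homologyι (S.X₂.sc 0) (S.X₂.shape _ _ hno)
    haveI : IsIso (S.X₃.homologyι 0) :=
      ShortComplex.isIso_homologyι (S.X₃.sc 0) (S.X₃.shape _ _ hno)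
    haveI := hS.epi_g
    haveI : Epi (S.g.f 0) := by infer_instance
    haveI : Epi (opcyclesMap S.g 0) := epi_of_epi_fac (p_opcyclesMap S.g 0)
    have heq : homologyMap S.g 0 =
        (S.X₂.homologyι 0 ≫ opcyclesMap S.g 0) ≫ inv (S.X₃.homologyι 0) := by
      rw [← homologyι_naturality, Category.assoc, IsIso.hom_inv_id, Category.comp_id]
    haveI : Epi (homologyMap S.g 0) := by rw [heq]; infer_instance
    exact (ModuleCat.epi_iff_surjective _).mp this
  have hsurj' : Function.Surjective (gn.baseChange Q) := by
    have h := LinearMap.lTensor_surjective Q hsurj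
    show Function.Surjective ⇑(gn.baseChange Q)
    rw [LinearMap.baseChange_eq_ltensor]; exact h
  have : pR R S 0 = Module.finrank Q (LinearMap.range (gn.baseChange Q)) := rfl
  rw [this, LinearMap.range_eq_top.2 hsurj', finrank_top]
  rfl

lemma rank_identity
    (hfinA : ∀ n, Module.Finite (FractionRing R)
      (TensorProduct R (FractionRing R) (S.X₁.homology n)))
    (hfinB : ∀ n, Module.Finite (FractionRing R)
      (TensorProduct R (FractionRing R) (S.X₂.homology n)))
    (hfinC : ∀ n, Module.Finite (FractionRing R)
      (TensorProduct R (FractionRing R) (S.X₃.homology n)))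
    (d : ℕ → ℕ)
    (hd : ∀ n, d n = rk R (LinearMap.range ((hS.δ (n + 1) n (by simp)).hom :
      S.X₃.homology (n + 1) →ₗ[R] S.X₁.homology n))) (n : ℕ) :
    rk R (S.X₁.homology n) + rk R (S.X₃.homology n)
      = rk R (S.X₂.homology n) + d n + (Nat.rec 0 (fun m _ => d m) n : ℕ) := by
  have h12 := L12 hS hfinA hfinB d hd n
  cases n with
  | zero =>
    have h4 := L4 hS
    have hr : (Nat.rec 0 (fun m _ => d m) 0 : ℕ) = 0 := rfl
    rw [hr]
    omega
  | succ m =>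
    have h3 := L3 hS hfinC d hd m
    have hr : (Nat.rec 0 (fun m _ => d m) (m + 1) : ℕ) = d m := rfl
    rw [hr]
    omega

/-- Additivity of the AE characteristic on weakly A-admissible short exact sequences
of Abel complexes: `χ_A(A) − χ_A(B) + χ_A(C) = 0`. -/
theorem stmt_16 (R : Type) [CommRing R] [IsDomain R] [IsNoetherianRing R]
    (S : ShortComplex (ChainComplex (ModuleCat R) ℕ)) (hS : S.ShortExact)
    (hfinA : ∀ n, Module.Finite (FractionRing R)
      (TensorProduct R (FractionRing R) (S.X₁.homology n)))
    (hfinB : ∀ n, Module.Finite (FractionRing R)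
      (TensorProduct R (FractionRing R) (S.X₂.homology n)))
    (hfinC : ∀ n, Module.Finite (FractionRing R)
      (TensorProduct R (FractionRing R) (S.X₃.homology n)))
    (d : ℕ → ℕ)
    (hd : ∀ n, d n = rk R (LinearMap.range ((hS.δ (n + 1) n (by simp)).hom :
      S.X₃.homology (n + 1) →ₗ[R] S.X₁.homology n)))
    -- the three complexes are Abel complexes, with AE characteristics χA, χB, χC:
    (χA χB χC : ℝ)
    (hA : HasAbelLim (fun n => (-1) ^ n * (rk R (S.X₁.homology n) : ℝ)) χA)
    (hB : HasAbelLim (fun n => (-1) ^ n * (rk R (S.X₂.homology n) : ℝ)) χB)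
    (hC : HasAbelLim (fun n => (-1) ^ n * (rk R (S.X₃.homology n) : ℝ)) χC)
    -- the short exact sequence is weakly A-admissible:
    (hrd : ∀ x : ℝ, |x| < 1 → Summable fun n => ((-1) ^ n * (d n : ℝ)) * x ^ n)
    (hadm : Tendsto (fun x : ℝ => (1 - x) ^ 2 * ∑' n, ((-1) ^ n * (d n : ℝ)) * x ^ n)
      (𝓝[<] 1) (𝓝 0)) :
    χA - χB + χC = 0 := by
  have key : ∀ n : ℕ,
      (-1:ℝ) ^ n * (rk R (S.X₁.homology n) : ℝ)
        - (-1:ℝ) ^ n * (rk R (S.X₂.homology n) : ℝ)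
        + (-1:ℝ) ^ n * (rk R (S.X₃.homology n) : ℝ)
      = (-1:ℝ) ^ n * (d n : ℝ)
        + (-1:ℝ) ^ n * ((Nat.rec 0 (fun m _ => d m) n : ℕ) : ℝ) := by
    intro n
    have h := rank_identity hS hfinA hfinB hfinC d hd n
    have h' : ((rk R (S.X₁.homology n) : ℝ)) + (rk R (S.X₃.homology n) : ℝ)
        = (rk R (S.X₂.homology n) : ℝ) + (d n : ℝ)
          + ((Nat.rec 0 (fun m _ => d m) n : ℕ) : ℝ) := by exact_mod_cast h
    linear_combination ((-1:ℝ) ^ n) * h'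
  have keysum : ∀ x : ℝ, |x| < 1 →
      (1 - x) * ∑' n, ((-1:ℝ) ^ n * (rk R (S.X₁.homology n) : ℝ)) * x ^ n
        - (1 - x) * ∑' n, ((-1:ℝ) ^ n * (rk R (S.X₂.homology n) : ℝ)) * x ^ n
        + (1 - x) * ∑' n, ((-1:ℝ) ^ n * (rk R (S.X₃.homology n) : ℝ)) * x ^ n
      = (1 - x) ^ 2 * ∑' n, ((-1:ℝ) ^ n * (d n : ℝ)) * x ^ n := by
    intro x hx
    have sA := hA.1 x hx
    have sB := hB.1 x hx
    have sC := hC.1 x hx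
    have sE := hrd x hx
    set u : ℕ → ℝ := fun n => ((-1:ℝ) ^ n * (d n : ℝ)) * x ^ n with hu
    set v : ℕ → ℝ := fun n =>
      ((-1:ℝ) ^ n * ((Nat.rec 0 (fun m _ => d m) n : ℕ) : ℝ)) * x ^ n with hv
    have hv1 : ∀ n, v (n + 1) = (-x) * u n := by
      intro n
      show ((-1:ℝ) ^ (n+1) * ((d n : ℕ) : ℝ)) * x ^ (n+1) = _
      rw [hu]
      ring
    have hv0 : v 0 = 0 := by
      show ((-1:ℝ) ^ 0 * ((0:ℕ) : ℝ)) * x ^ 0 = 0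
      norm_num
    have sv : Summable v := by
      have h1 : Summable (fun n => v (n + 1)) := by
        simp only [hv1]
        exact sE.mul_left (-x)
      exact (summable_nat_add_iff 1).mp h1
    have hpt : ∀ n : ℕ,
        ((-1:ℝ) ^ n * (rk R (S.X₁.homology n) : ℝ)) * x ^ n
          - ((-1:ℝ) ^ n * (rk R (S.X₂.homology n) : ℝ)) * x ^ n
          + ((-1:ℝ) ^ n * (rk R (S.X₃.homology n) : ℝ)) * x ^ n
        = u n + v n := by
      intro n
      have := key n
      rw [hu, hv]
      linear_combination (x ^ n) * this
    have hvt : ∑' n, v n = -x * ∑' n, u n := by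
      rw [Summable.tsum_eq_zero_add sv, hv0]
      simp only [hv1]
      rw [tsum_mul_left]
      ring
    have hT : (∑' n, ((-1:ℝ) ^ n * (rk R (S.X₁.homology n) : ℝ)) * x ^ n)
        - (∑' n, ((-1:ℝ) ^ n * (rk R (S.X₂.homology n) : ℝ)) * x ^ n)
        + (∑' n, ((-1:ℝ) ^ n * (rk R (S.X₃.homology n) : ℝ)) * x ^ n)
        = (1 - x) * ∑' n, u n := by
      rw [← Summable.tsum_sub sA sB, ← Summable.tsum_add (sA.sub sB) sC, tsum_congr hpt,
        Summable.tsum_add sE sv, hvt]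
      ring
    linear_combination (1 - x) * hT
  have T1 : Tendsto (fun x : ℝ =>
      (1 - x) * ∑' n, ((-1:ℝ) ^ n * (rk R (S.X₁.homology n) : ℝ)) * x ^ n
        - (1 - x) * ∑' n, ((-1:ℝ) ^ n * (rk R (S.X₂.homology n) : ℝ)) * x ^ n
        + (1 - x) * ∑' n, ((-1:ℝ) ^ n * (rk R (S.X₃.homology n) : ℝ)) * x ^ n)
      (𝓝[<] 1) (𝓝 (χA - χB + χC)) := (hA.2.sub hB.2).add hC.2
  have Ev : ∀ᶠ x in 𝓝[<] (1:ℝ), |x| < 1 := by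
    have e1 : ∀ᶠ x in 𝓝[<] (1:ℝ), x < 1 := eventually_nhdsWithin_of_forall fun x hx => hx
    have e2 : ∀ᶠ x in 𝓝[<] (1:ℝ), -1 < x :=
      eventually_nhdsWithin_of_eventually_nhds (eventually_gt_nhds (by norm_num))
    filter_upwards [e1, e2] with x h1 h2
    exact abs_lt.mpr ⟨h2, h1⟩
  have T2 : Tendsto (fun x : ℝ => (1 - x) ^ 2 * ∑' n, ((-1:ℝ) ^ n * (d n : ℝ)) * x ^ n)
      (𝓝[<] 1) (𝓝 (χA - χB + χC)) :=
    T1.congr' (Ev.mono fun x hx => keysum x hx)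
  exact tendsto_nhds_unique T2 hadm
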